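/- arXiv:0801.4824 — 4 statements merged into one kernel-verified Lean document; each statement's English description precedes it below -/
import Mathlib

section
/- For every θ ≥ 1 and all x, e ∈ ℝⁿ, the vector g(x,e) with components g_i(x,e) = f_i(x₁+e₁,…,x_i+e_i) − f_i(x₁,…,x_i) satisfies ‖Δ_θ⁻¹ g(x,e)‖ ≤ L√n · ‖Δ_θ⁻¹ e‖, where Δ_θ = diag(θ, θ², …, θⁿ). -/
open Matrix

/-- For `θ ≥ 1`, the vector `g(x,e)` with components
`gᵢ(x,e) = fᵢ(x+e) - fᵢ(x)` satisfies `‖Δ_θ⁻¹ g(x,e)‖ ≤ L √n ‖Δ_θ⁻¹ e‖`,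
where `Δ_θ = diag(θ, θ², …, θⁿ)`. -/
theorem stmt2 (n : ℕ) (hn : 1 ≤ n) (L : ℝ) (hL : 0 ≤ L)
    (f : Fin n → (Fin n → ℝ) → ℝ)
    (hf0 : ∀ i, f i (fun _ => 0) = 0)
    (hfLip : ∀ i (x z : Fin n → ℝ), |f i x - f i z| ≤
      L * Real.sqrt (∑ j ∈ Finset.univ.filter (fun j => j ≤ i), (x j - z j) ^ 2))
    (θ : ℝ) (hθ : 1 ≤ θ)
    (Δ : Matrix (Fin n) (Fin n) ℝ)
    (hΔ : Δ = Matrix.diagonal (fun i : Fin n => θ ^ ((i : ℕ) + 1))) :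
    ∀ x e : Fin n → ℝ,
      Real.sqrt (∑ i, ((Δ⁻¹ *ᵥ fun i => f i (x + e) - f i x) i) ^ 2) ≤
        L * Real.sqrt n * Real.sqrt (∑ i, ((Δ⁻¹ *ᵥ e) i) ^ 2) := by
  intro x e
  subst hΔ
  have hθ0 : (0:ℝ) < θ := lt_of_lt_of_le one_pos hθ
  have hinv : (Matrix.diagonal (fun i : Fin n => θ ^ ((i:ℕ)+1)))⁻¹
      = Matrix.diagonal (fun i : Fin n => (θ ^ ((i:ℕ)+1))⁻¹) := by
    apply Matrix.inv_eq_right_inv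
    rw [Matrix.diagonal_mul_diagonal]
    ext i j
    by_cases h : i = j <;>
      simp [h, Matrix.diagonal, Matrix.one_apply, mul_inv_cancel₀ (pow_ne_zero _ hθ0.ne')]
  rw [hinv]
  simp only [Matrix.mulVec_diagonal]
  set S := ∑ j : Fin n, ((θ ^ ((j:ℕ)+1))⁻¹ * e j)^2 with hS
  have hS0 : 0 ≤ S := Finset.sum_nonneg fun j _ => sq_nonneg _
  have key : ∀ i : Fin n,
      ((θ ^ ((i:ℕ)+1))⁻¹ * (f i (x+e) - f i x))^2 ≤ L^2 * S := by
    intro i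
    have hT0 : (0:ℝ) ≤ ∑ j ∈ Finset.univ.filter (fun j => j ≤ i), (e j)^2 :=
      Finset.sum_nonneg fun j _ => sq_nonneg _
    have h2 : |f i (x+e) - f i x| ≤
        L * Real.sqrt (∑ j ∈ Finset.univ.filter (fun j => j ≤ i), (e j)^2) := by
      simpa using hfLip i (x+e) x
    have hg : (f i (x+e) - f i x)^2 ≤
        L^2 * (∑ j ∈ Finset.univ.filter (fun j => j ≤ i), (e j)^2) := by
      have := pow_le_pow_left₀ (abs_nonneg _) h2 2
      calc (f i (x+e) - f i x)^2 = |f i (x+e) - f i x|^2 := (sq_abs _).symm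
        _ ≤ (L * Real.sqrt (∑ j ∈ Finset.univ.filter (fun j => j ≤ i), (e j)^2))^2 := this
        _ = L^2 * (∑ j ∈ Finset.univ.filter (fun j => j ≤ i), (e j)^2) := by
            rw [mul_pow, Real.sq_sqrt hT0]
    have hmono : ((θ ^ ((i:ℕ)+1))⁻¹)^2 *
        (∑ j ∈ Finset.univ.filter (fun j => j ≤ i), (e j)^2) ≤ S := by
      rw [Finset.mul_sum]
      calc ∑ j ∈ Finset.univ.filter (fun j => j ≤ i), ((θ ^ ((i:ℕ)+1))⁻¹)^2 * (e j)^2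
          ≤ ∑ j ∈ Finset.univ.filter (fun j => j ≤ i), ((θ ^ ((j:ℕ)+1))⁻¹ * e j)^2 := by
            apply Finset.sum_le_sum
            intro j hj
            have hji : (j:ℕ) + 1 ≤ (i:ℕ) + 1 := by
              have := (Finset.mem_filter.mp hj).2
              omega
            have hpow : θ ^ ((j:ℕ)+1) ≤ θ ^ ((i:ℕ)+1) := pow_le_pow_right₀ hθ hji
            have hpos : (0:ℝ) < θ ^ ((j:ℕ)+1) := pow_pos hθ0 _
            have hinvle : (θ ^ ((i:ℕ)+1))⁻¹ ≤ (θ ^ ((j:ℕ)+1))⁻¹ :=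
              inv_anti₀ hpos hpow
            have hinvnn : (0:ℝ) ≤ (θ ^ ((i:ℕ)+1))⁻¹ :=
              inv_nonneg.mpr (pow_pos hθ0 _).le
            rw [mul_pow]
            exact mul_le_mul_of_nonneg_right
              (pow_le_pow_left₀ hinvnn hinvle 2) (sq_nonneg _)
        _ ≤ S := Finset.sum_le_sum_of_subset_of_nonneg (Finset.filter_subset _ _)
              (fun j _ _ => sq_nonneg _)
    calc ((θ ^ ((i:ℕ)+1))⁻¹ * (f i (x+e) - f i x))^2
        = ((θ ^ ((i:ℕ)+1))⁻¹)^2 * (f i (x+e) - f i x)^2 := by ring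
      _ ≤ ((θ ^ ((i:ℕ)+1))⁻¹)^2 * (L^2 * (∑ j ∈ Finset.univ.filter (fun j => j ≤ i), (e j)^2)) :=
          mul_le_mul_of_nonneg_left hg (sq_nonneg _)
      _ = L^2 * (((θ ^ ((i:ℕ)+1))⁻¹)^2 * (∑ j ∈ Finset.univ.filter (fun j => j ≤ i), (e j)^2)) := by
          ring
      _ ≤ L^2 * S := mul_le_mul_of_nonneg_left hmono (sq_nonneg _)
  have hsum : (∑ i : Fin n, ((θ ^ ((i:ℕ)+1))⁻¹ * (f i (x+e) - f i x))^2) ≤ n * (L^2 * S) := by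
    calc (∑ i : Fin n, ((θ ^ ((i:ℕ)+1))⁻¹ * (f i (x+e) - f i x))^2)
        ≤ ∑ _i : Fin n, L^2 * S := Finset.sum_le_sum fun i _ => key i
      _ = n * (L^2 * S) := by simp [Finset.sum_const, nsmul_eq_mul]
  calc Real.sqrt (∑ i : Fin n, ((θ ^ ((i:ℕ)+1))⁻¹ * (f i (x+e) - f i x))^2)
      ≤ Real.sqrt (n * (L^2 * S)) := Real.sqrt_le_sqrt hsum
    _ = L * Real.sqrt n * Real.sqrt S := by
        rw [Real.sqrt_mul (by positivity), Real.sqrt_mul (by positivity),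
          Real.sqrt_sq hL]
        ring
end

section
/- If θ ≥ max(1, 2‖P‖L√n/μ), then for all x, e ∈ ℝⁿ: 2·(Δ_θ⁻¹e)ᵀ P Δ_θ⁻¹[(A + Δ_θ k cᵀ)e + g(x,e)] ≤ −(θμ/‖P‖)·(Δ_θ⁻¹e)ᵀ P (Δ_θ⁻¹e), where g(x,e) has components g_i(x,e) = f_i(x₁+e₁,…,x_i+e_i) − f_i(x₁,…,x_i). -/
open Matrix

lemma dot_mulVec_le {n : ℕ} (P : Matrix (Fin n) (Fin n) ℝ) (v w : Fin n → ℝ) :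
    v ⬝ᵥ (P *ᵥ w) ≤ ‖Matrix.toEuclideanCLM (𝕜 := ℝ) P‖ *
      ‖(WithLp.equiv 2 (Fin n → ℝ)).symm v‖ * ‖(WithLp.equiv 2 (Fin n → ℝ)).symm w‖ := by
  have h1 : v ⬝ᵥ (P *ᵥ w) =
      (inner ℝ ((WithLp.equiv 2 (Fin n → ℝ)).symm v)
        (Matrix.toEuclideanCLM (𝕜 := ℝ) P ((WithLp.equiv 2 (Fin n → ℝ)).symm w)) : ℝ) := by
    rw [WithLp.equiv_symm_apply, Matrix.toEuclideanCLM_toLp, EuclideanSpace.inner_toLp_toLp]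
    simp [dotProduct_comm]
  rw [h1]
  calc _ ≤ ‖(WithLp.equiv 2 (Fin n → ℝ)).symm v‖ *
        ‖Matrix.toEuclideanCLM (𝕜 := ℝ) P ((WithLp.equiv 2 (Fin n → ℝ)).symm w)‖ :=
      real_inner_le_norm _ _
    _ ≤ ‖(WithLp.equiv 2 (Fin n → ℝ)).symm v‖ *
        (‖Matrix.toEuclideanCLM (𝕜 := ℝ) P‖ * ‖(WithLp.equiv 2 (Fin n → ℝ)).symm w‖) := by
      gcongr
      exact ContinuousLinearMap.le_opNorm _ _
    _ = _ := by ring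

lemma eucl_norm_sq {n : ℕ} (v : Fin n → ℝ) :
    ‖(WithLp.equiv 2 (Fin n → ℝ)).symm v‖ ^ 2 = ∑ i, v i ^ 2 := by
  rw [EuclideanSpace.norm_eq, Real.sq_sqrt (by positivity)]
  simp [sq_abs]

/-- The Lyapunov dissipation inequality for the scaled high-gain observer error,
without measurement error: if `θ ≥ max(1, 2‖P‖L√n/μ)` then
`2 (Δ_θ⁻¹e)ᵀ P Δ_θ⁻¹[(A + Δ_θ k cᵀ)e + g(x,e)] ≤ -(θμ/‖P‖) (Δ_θ⁻¹e)ᵀ P (Δ_θ⁻¹e)`. -/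
theorem stmt4 (n : ℕ) (hn : 1 ≤ n) (L : ℝ) (hL : 0 ≤ L)
    (f : Fin n → (Fin n → ℝ) → ℝ)
    (hf0 : ∀ i, f i (fun _ => 0) = 0)
    (hfLip : ∀ i (x z : Fin n → ℝ), |f i x - f i z| ≤
      L * Real.sqrt (∑ j ∈ Finset.univ.filter (fun j => j ≤ i), (x j - z j) ^ 2))
    (A : Matrix (Fin n) (Fin n) ℝ)
    (hA : ∀ i j : Fin n, A i j = if (j : ℕ) = (i : ℕ) + 1 then 1 else 0)
    (c : Fin n → ℝ) (hc : ∀ i, c i = if (i : ℕ) = 0 then 1 else 0)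
    (k : Fin n → ℝ) (θ : ℝ) (hθpos : 0 < θ)
    (Δ : Matrix (Fin n) (Fin n) ℝ)
    (hΔ : Δ = Matrix.diagonal (fun i : Fin n => θ ^ ((i : ℕ) + 1)))
    (P : Matrix (Fin n) (Fin n) ℝ) (hP : P.PosDef)
    (μ : ℝ) (hμ : 0 < μ)
    (hLyap : ∀ z : Fin n → ℝ,
      z ⬝ᵥ ((P * (A + Matrix.vecMulVec k c) + (A + Matrix.vecMulVec k c)ᵀ * P) *ᵥ z)
        ≤ -2 * μ * ∑ i, z i ^ 2)
    (hθ : max 1 (2 * ‖Matrix.toEuclideanCLM (𝕜 := ℝ) P‖ * L * Real.sqrt n / μ) ≤ θ) :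
    ∀ x e : Fin n → ℝ,
      2 * ((Δ⁻¹ *ᵥ e) ⬝ᵥ (P *ᵥ (Δ⁻¹ *ᵥ
          ((A + Δ * Matrix.vecMulVec k c) *ᵥ e + fun i => f i (x + e) - f i x))))
        ≤ -(θ * μ / ‖Matrix.toEuclideanCLM (𝕜 := ℝ) P‖) *
            ((Δ⁻¹ *ᵥ e) ⬝ᵥ (P *ᵥ (Δ⁻¹ *ᵥ e))) := by
  intro x e
  set Pn := ‖Matrix.toEuclideanCLM (𝕜 := ℝ) P‖ with hPndef
  have hθ1 : (1 : ℝ) ≤ θ := le_trans (le_max_left _ _) hθ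
  have hθ2 : 2 * Pn * L * Real.sqrt n / μ ≤ θ := le_trans (le_max_right _ _) hθ
  have hθne : θ ≠ 0 := ne_of_gt hθpos
  have hΔinv : Δ⁻¹ = Matrix.diagonal (fun i : Fin n => (θ ^ ((i : ℕ) + 1))⁻¹) := by
    apply Matrix.inv_eq_left_inv
    rw [hΔ, Matrix.diagonal_mul_diagonal]
    convert Matrix.diagonal_one with i
    exact inv_mul_cancel₀ (pow_ne_zero _ hθne)
  set η := Δ⁻¹ *ᵥ e with hη
  set g : Fin n → ℝ := fun i => f i (x + e) - f i x with hg
  set M := A + Matrix.vecMulVec k c with hM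
  have hηi : ∀ i, η i = (θ ^ ((i : ℕ) + 1))⁻¹ * e i := by
    intro i; rw [hη, hΔinv, Matrix.mulVec_diagonal]
  set Nη := ‖(WithLp.equiv 2 (Fin n → ℝ)).symm η‖ with hNη
  have hNηnn : 0 ≤ Nη := norm_nonneg _
  -- Pn positivity
  have hPn : 0 < Pn := by
    rw [hPndef, norm_pos_iff]
    intro h0
    have hP0 : P = 0 := by
      have := congrArg (Matrix.toEuclideanCLM (n := Fin n) (𝕜 := ℝ)).symm h0
      simpa using this
    have hv : (fun _ : Fin n => (1:ℝ)) ≠ 0 := by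
      intro hv
      have := congrFun hv ⟨0, hn⟩
      norm_num at this
    have := hP.dotProduct_mulVec_pos hv
    rw [hP0] at this
    simp at this
  -- symmetry of P
  have hPsymm : Pᵀ = P := by
    ext i j
    have := congrFun (congrFun hP.1 i) j
    simpa [Matrix.conjTranspose_apply] using this
  -- key identity
  have hkey : Δ⁻¹ *ᵥ ((A + Δ * Matrix.vecMulVec k c) *ᵥ e) = θ • (M *ᵥ η) := by
    funext i
    rw [hΔinv, Matrix.mulVec_diagonal]
    simp only [Pi.smul_apply, smul_eq_mul, Matrix.mulVec, dotProduct]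
    rw [Finset.mul_sum, Finset.mul_sum]
    apply Finset.sum_congr rfl
    intro j _
    rw [hM, hΔ]
    simp only [Matrix.add_apply, Matrix.mul_apply, Matrix.vecMulVec_apply, hA, hc, hηi]
    rw [Finset.sum_eq_single i]
    · simp only [Matrix.diagonal_apply_eq]
      rcases eq_or_ne ((j : ℕ)) ((i : ℕ) + 1) with hji | hji
      · have hj0 : (j : ℕ) ≠ 0 := by omega
        have hi10 : ((i:ℕ) + 1) ≠ 0 := Nat.succ_ne_zero _
        simp only [hji, if_pos rfl, if_neg hi10, mul_zero, add_zero, mul_one, one_mul]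
        rw [pow_succ]
        have h1 : θ ^ ((i : ℕ) + 1) ≠ 0 := pow_ne_zero _ hθne
        field_simp
        ring
      · rcases eq_or_ne ((j : ℕ)) 0 with hj0 | hj0
        · simp only [if_neg hji, if_pos hj0, hj0]
          have h1 : θ ^ ((i : ℕ) + 1) ≠ 0 := pow_ne_zero _ hθne
          field_simp
          rw [if_neg (by omega)]
          ring
        · simp [if_neg hji, if_neg hj0]
    · intro b _ hb
      simp [Matrix.diagonal_apply_ne _ (Ne.symm hb)]
    · intro h; exact absurd (Finset.mem_univ i) h
  -- Lyapunov bound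
  have hLy : η ⬝ᵥ (P *ᵥ (M *ᵥ η)) ≤ -μ * ∑ i, η i ^ 2 := by
    have h := hLyap η
    rw [Matrix.add_mulVec, ← Matrix.mulVec_mulVec, ← Matrix.mulVec_mulVec,
      dotProduct_add] at h
    have hv : ∀ u : Fin n → ℝ, u ᵥ* P = P *ᵥ u := by
      intro u
      rw [← Matrix.vecMul_transpose]
      rw [hPsymm]
    have hsym : η ⬝ᵥ (Mᵀ *ᵥ (P *ᵥ η)) = η ⬝ᵥ (P *ᵥ (M *ᵥ η)) := by
      rw [Matrix.dotProduct_mulVec η Mᵀ, Matrix.vecMul_transpose,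
        Matrix.dotProduct_mulVec η P, hv, dotProduct_comm]
    rw [hsym] at h
    linarith
  -- Lipschitz bound on scaled nonlinearity componentwise
  have hgb : ∀ i, |(Δ⁻¹ *ᵥ g) i| ≤ L * Nη := by
    intro i
    rw [hΔinv, Matrix.mulVec_diagonal, abs_mul]
    have hti : (0:ℝ) < (θ ^ ((i : ℕ) + 1))⁻¹ := by positivity
    rw [abs_of_pos hti]
    have h1 : |g i| ≤ L * Real.sqrt (∑ j ∈ Finset.univ.filter (fun j => j ≤ i), (e j) ^ 2) := by
      have := hfLip i (x + e) x
      simpa [hg] using this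
    have hsq : ∑ j ∈ Finset.univ.filter (fun j => j ≤ i), ((θ ^ ((i : ℕ) + 1))⁻¹ * e j) ^ 2
        = (θ ^ ((i : ℕ) + 1))⁻¹ ^ 2 * ∑ j ∈ Finset.univ.filter (fun j => j ≤ i), (e j) ^ 2 := by
      rw [Finset.mul_sum]
      simp_rw [mul_pow]
    calc (θ ^ ((i : ℕ) + 1))⁻¹ * |g i|
        ≤ (θ ^ ((i : ℕ) + 1))⁻¹ *
          (L * Real.sqrt (∑ j ∈ Finset.univ.filter (fun j => j ≤ i), (e j) ^ 2)) :=
          mul_le_mul_of_nonneg_left h1 hti.le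
      _ = L * Real.sqrt (∑ j ∈ Finset.univ.filter (fun j => j ≤ i),
            ((θ ^ ((i : ℕ) + 1))⁻¹ * e j) ^ 2) := by
          rw [hsq, Real.sqrt_mul (sq_nonneg _), Real.sqrt_sq hti.le]
          ring
      _ ≤ L * Real.sqrt (∑ j, η j ^ 2) := by
          apply mul_le_mul_of_nonneg_left _ hL
          apply Real.sqrt_le_sqrt
          calc ∑ j ∈ Finset.univ.filter (fun j => j ≤ i), ((θ ^ ((i : ℕ) + 1))⁻¹ * e j) ^ 2
              ≤ ∑ j ∈ Finset.univ.filter (fun j => j ≤ i), η j ^ 2 := by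
                apply Finset.sum_le_sum
                intro j hj
                have hji : (j : ℕ) ≤ (i : ℕ) := by
                  simpa using (Finset.mem_filter.mp hj).2
                rw [hηi j]
                rw [mul_pow, mul_pow]
                apply mul_le_mul_of_nonneg_right _ (sq_nonneg _)
                have hle : (θ ^ ((i : ℕ) + 1))⁻¹ ≤ (θ ^ ((j : ℕ) + 1))⁻¹ := by
                  rw [← inv_pow, ← inv_pow]
                  exact pow_le_pow_of_le_one (by positivity)
                    (inv_le_one_of_one_le₀ hθ1) (by omega)
                exact pow_le_pow_left₀ (by positivity) hle 2
            _ ≤ ∑ j, η j ^ 2 :=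
                Finset.sum_le_sum_of_subset_of_nonneg (Finset.filter_subset _ _)
                  (fun _ _ _ => sq_nonneg _)
      _ = L * Nη := by
          rw [hNη, ← eucl_norm_sq η, Real.sqrt_sq (norm_nonneg _)]
  -- norm bound on scaled nonlinearity
  have hNg : ‖(WithLp.equiv 2 (Fin n → ℝ)).symm (Δ⁻¹ *ᵥ g)‖ ≤ Real.sqrt n * (L * Nη) := by
    have h2 : ‖(WithLp.equiv 2 (Fin n → ℝ)).symm (Δ⁻¹ *ᵥ g)‖ ^ 2 ≤ n * (L * Nη) ^ 2 := by
      rw [eucl_norm_sq]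
      calc ∑ i, ((Δ⁻¹ *ᵥ g) i) ^ 2 ≤ ∑ _i : Fin n, (L * Nη) ^ 2 := by
            apply Finset.sum_le_sum
            intro i _
            rw [← sq_abs]
            exact pow_le_pow_left₀ (abs_nonneg _) (hgb i) 2
        _ = n * (L * Nη) ^ 2 := by simp [mul_comm]
    calc ‖(WithLp.equiv 2 (Fin n → ℝ)).symm (Δ⁻¹ *ᵥ g)‖
        = Real.sqrt (‖(WithLp.equiv 2 (Fin n → ℝ)).symm (Δ⁻¹ *ᵥ g)‖ ^ 2) :=
          (Real.sqrt_sq (norm_nonneg _)).symm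
      _ ≤ Real.sqrt (n * (L * Nη) ^ 2) := Real.sqrt_le_sqrt h2
      _ = Real.sqrt n * (L * Nη) := by
          rw [Real.sqrt_mul (Nat.cast_nonneg n), Real.sqrt_sq (by positivity)]
  -- split the left-hand side
  have hLHS : 2 * (η ⬝ᵥ (P *ᵥ (Δ⁻¹ *ᵥ ((A + Δ * Matrix.vecMulVec k c) *ᵥ e + g))))
      = 2 * θ * (η ⬝ᵥ (P *ᵥ (M *ᵥ η))) + 2 * (η ⬝ᵥ (P *ᵥ (Δ⁻¹ *ᵥ g))) := by
    rw [Matrix.mulVec_add, hkey, Matrix.mulVec_add, Matrix.mulVec_smul,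
      dotProduct_add, dotProduct_smul]
    simp only [smul_eq_mul]
    ring
  -- bounds
  have hT2 : η ⬝ᵥ (P *ᵥ (Δ⁻¹ *ᵥ g)) ≤ Pn * Nη * (Real.sqrt n * (L * Nη)) := by
    calc η ⬝ᵥ (P *ᵥ (Δ⁻¹ *ᵥ g))
        ≤ Pn * Nη * ‖(WithLp.equiv 2 (Fin n → ℝ)).symm (Δ⁻¹ *ᵥ g)‖ := dot_mulVec_le P η _
      _ ≤ Pn * Nη * (Real.sqrt n * (L * Nη)) := by
          apply mul_le_mul_of_nonneg_left hNg (by positivity)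
  have hdot : η ⬝ᵥ (P *ᵥ η) ≤ Pn * Nη * Nη := dot_mulVec_le P η η
  have hS : ∑ i, η i ^ 2 = Nη ^ 2 := (eucl_norm_sq η).symm
  have h2PL : 2 * Pn * L * Real.sqrt n ≤ θ * μ := by
    rw [div_le_iff₀ hμ] at hθ2
    linarith
  -- assemble
  rw [hLHS]
  have hstep : 2 * θ * (η ⬝ᵥ (P *ᵥ (M *ᵥ η))) + 2 * (η ⬝ᵥ (P *ᵥ (Δ⁻¹ *ᵥ g)))
      ≤ -(θ * μ) * Nη ^ 2 := by
    have h1 : 2 * θ * (η ⬝ᵥ (P *ᵥ (M *ᵥ η))) ≤ 2 * θ * (-μ * Nη ^ 2) := by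
      apply mul_le_mul_of_nonneg_left _ (by positivity)
      rw [← hS]; exact hLy
    nlinarith [sq_nonneg Nη]
  refine le_trans hstep ?_
  have hrhs : -(θ * μ / Pn) * (η ⬝ᵥ (P *ᵥ η)) ≥ -(θ * μ) * Nη ^ 2 := by
    have hc1 : (θ * μ / Pn) * (η ⬝ᵥ (P *ᵥ η)) ≤ (θ * μ / Pn) * (Pn * Nη * Nη) :=
      mul_le_mul_of_nonneg_left hdot (by positivity)
    have hc2 : (θ * μ / Pn) * (Pn * Nη * Nη) = θ * μ * Nη ^ 2 := by
      field_simp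
    nlinarith
  linarith
end

section
/- If θ ≥ max(1, 2‖P‖L√n/μ), then for all x, e ∈ ℝⁿ and all v ∈ ℝ: 2·(Δ_θ⁻¹e)ᵀ P Δ_θ⁻¹[(A + Δ_θ k cᵀ)e + Δ_θ k v + g(x,e)] ≤ −(θμ/(2‖P‖))·(Δ_θ⁻¹e)ᵀ P (Δ_θ⁻¹e) + (2‖P‖²‖k‖²/(θμ))·v², where g(x,e) has components g_i(x,e) = f_i(x₁+e₁,…,x_i+e_i) − f_i(x₁,…,x_i). -/
open Matrix

lemma euc_norm_eq' (n : ℕ) (x : Fin n → ℝ) :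
    ‖(WithLp.equiv 2 (Fin n → ℝ)).symm x‖ = Real.sqrt (∑ i, x i ^ 2) := by
  rw [EuclideanSpace.norm_eq]
  congr 1
  refine Finset.sum_congr rfl fun i _ => ?_
  simp [sq_abs]

lemma dot_mulVec_le' (n : ℕ) (M : Matrix (Fin n) (Fin n) ℝ) (x y : Fin n → ℝ) :
    x ⬝ᵥ (M *ᵥ y) ≤ ‖Matrix.toEuclideanCLM (𝕜 := ℝ) M‖ *
      Real.sqrt (∑ i, x i ^ 2) * Real.sqrt (∑ i, y i ^ 2) := by
  set X : EuclideanSpace ℝ (Fin n) := (WithLp.equiv 2 _).symm x with hX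
  set Y : EuclideanSpace ℝ (Fin n) := (WithLp.equiv 2 _).symm y with hY
  have h1 : x ⬝ᵥ (M *ᵥ y) = inner (𝕜 := ℝ) X (Matrix.toEuclideanCLM (𝕜 := ℝ) M Y) := by
    simp only [X, Y, WithLp.equiv_symm_apply, Matrix.toEuclideanCLM_toLp]
    simp [inner, dotProduct, Matrix.toLin'_apply, mulVec, X, Y, mul_comm]
  rw [h1]
  calc inner (𝕜 := ℝ) X (Matrix.toEuclideanCLM (𝕜 := ℝ) M Y)
      ≤ ‖X‖ * ‖Matrix.toEuclideanCLM (𝕜 := ℝ) M Y‖ := real_inner_le_norm _ _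
    _ ≤ ‖X‖ * (‖Matrix.toEuclideanCLM (𝕜 := ℝ) M‖ * ‖Y‖) := by
        gcongr; exact (Matrix.toEuclideanCLM (𝕜 := ℝ) M).le_opNorm Y
    _ = _ := by rw [hX, hY, euc_norm_eq', euc_norm_eq']; ring

lemma abs_dot_mulVec_le' (n : ℕ) (M : Matrix (Fin n) (Fin n) ℝ) (x y : Fin n → ℝ) :
    |x ⬝ᵥ (M *ᵥ y)| ≤ ‖Matrix.toEuclideanCLM (𝕜 := ℝ) M‖ *
      Real.sqrt (∑ i, x i ^ 2) * Real.sqrt (∑ i, y i ^ 2) := by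
  have h1 := dot_mulVec_le' n M (-x) y
  have h2 := dot_mulVec_le' n M x y
  rw [neg_dotProduct] at h1
  have hs : (∑ i, (-x) i ^ 2) = ∑ i, x i ^ 2 := by
    refine Finset.sum_congr rfl fun i _ => ?_
    simp
  rw [hs] at h1
  rw [abs_le]
  exact ⟨by linarith, h2⟩

/-- The Lyapunov ISS inequality for the scaled high-gain observer error with
measurement error `v`: if `θ ≥ max(1, 2‖P‖L√n/μ)` then
`2 (Δ_θ⁻¹e)ᵀ P Δ_θ⁻¹[(A + Δ_θ k cᵀ)e + Δ_θ k v + g(x,e)]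
  ≤ -(θμ/(2‖P‖)) (Δ_θ⁻¹e)ᵀ P (Δ_θ⁻¹e) + (2‖P‖²‖k‖²/(θμ)) v²`. -/
theorem stmt5 (n : ℕ) (hn : 1 ≤ n) (L : ℝ) (hL : 0 ≤ L)
    (f : Fin n → (Fin n → ℝ) → ℝ)
    (hf0 : ∀ i, f i (fun _ => 0) = 0)
    (hfLip : ∀ i (x z : Fin n → ℝ), |f i x - f i z| ≤
      L * Real.sqrt (∑ j ∈ Finset.univ.filter (fun j => j ≤ i), (x j - z j) ^ 2))
    (A : Matrix (Fin n) (Fin n) ℝ)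
    (hA : ∀ i j : Fin n, A i j = if (j : ℕ) = (i : ℕ) + 1 then 1 else 0)
    (c : Fin n → ℝ) (hc : ∀ i, c i = if (i : ℕ) = 0 then 1 else 0)
    (k : Fin n → ℝ) (θ : ℝ) (hθpos : 0 < θ)
    (Δ : Matrix (Fin n) (Fin n) ℝ)
    (hΔ : Δ = Matrix.diagonal (fun i : Fin n => θ ^ ((i : ℕ) + 1)))
    (P : Matrix (Fin n) (Fin n) ℝ) (hP : P.PosDef)
    (μ : ℝ) (hμ : 0 < μ)
    (hLyap : ∀ z : Fin n → ℝ,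
      z ⬝ᵥ ((P * (A + Matrix.vecMulVec k c) + (A + Matrix.vecMulVec k c)ᵀ * P) *ᵥ z)
        ≤ -2 * μ * ∑ i, z i ^ 2)
    (hθ : max 1 (2 * ‖Matrix.toEuclideanCLM (𝕜 := ℝ) P‖ * L * Real.sqrt n / μ) ≤ θ) :
    ∀ (x e : Fin n → ℝ) (v : ℝ),
      2 * ((Δ⁻¹ *ᵥ e) ⬝ᵥ (P *ᵥ (Δ⁻¹ *ᵥ
          ((A + Δ * Matrix.vecMulVec k c) *ᵥ e + v • (Δ *ᵥ k) + fun i => f i (x + e) - f i x))))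
        ≤ -(θ * μ / (2 * ‖Matrix.toEuclideanCLM (𝕜 := ℝ) P‖)) *
            ((Δ⁻¹ *ᵥ e) ⬝ᵥ (P *ᵥ (Δ⁻¹ *ᵥ e)))
          + (2 * ‖Matrix.toEuclideanCLM (𝕜 := ℝ) P‖ ^ 2 * (Real.sqrt (∑ i, k i ^ 2)) ^ 2
              / (θ * μ)) * v ^ 2 := by
  intro x e v
  have hθ1 : (1 : ℝ) ≤ θ := le_trans (le_max_left _ _) hθ
  set opP : ℝ := ‖Matrix.toEuclideanCLM (𝕜 := ℝ) P‖ with hopPdef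
  -- opP > 0
  have hne : Nonempty (Fin n) := ⟨⟨0, hn⟩⟩
  have hPne : P ≠ 0 := by
    intro h
    have hd := hP.det_pos
    rw [h, Matrix.det_zero] at hd
    exact lt_irrefl 0 hd
  have hCLMne : Matrix.toEuclideanCLM (𝕜 := ℝ) P ≠ 0 := by
    intro h
    apply hPne
    have h2 := congrArg (Matrix.toEuclideanCLM (n := Fin n) (𝕜 := ℝ)).symm h
    simpa using h2
  have hopP : 0 < opP := by
    rw [hopPdef]
    exact norm_pos_iff.mpr hCLMne
  -- Δ inverse facts
  have hmul1 : Δ * Matrix.diagonal (fun i : Fin n => (θ ^ ((i : ℕ) + 1))⁻¹) = 1 := by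
    rw [hΔ, Matrix.diagonal_mul_diagonal, ← Matrix.diagonal_one]
    congr 1; funext i; field_simp
  have hΔinv : Δ⁻¹ = Matrix.diagonal (fun i : Fin n => (θ ^ ((i : ℕ) + 1))⁻¹) :=
    Matrix.inv_eq_right_inv hmul1
  have hinvmul : Δ⁻¹ * Δ = 1 := by
    rw [hΔinv, hΔ, Matrix.diagonal_mul_diagonal, ← Matrix.diagonal_one]
    congr 1; funext i; field_simp
  have hmulinv : Δ * Δ⁻¹ = 1 := by rw [hΔinv]; exact hmul1
  set B : Matrix (Fin n) (Fin n) ℝ := A + Matrix.vecMulVec k c with hB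
  set η : Fin n → ℝ := Δ⁻¹ *ᵥ e with hη
  set g : Fin n → ℝ := fun i => f i (x + e) - f i x with hg
  have heη : e = Δ *ᵥ η := by
    rw [hη, Matrix.mulVec_mulVec, hmulinv, Matrix.one_mulVec]
  -- the matrix identity
  have hM1 : (A + Δ * Matrix.vecMulVec k c) * Δ = θ • (Δ * B) := by
    rw [hB]
    funext i j
    rw [hΔ]
    simp only [Matrix.mul_diagonal, Matrix.diagonal_mul, Matrix.add_apply, Matrix.smul_apply,
      smul_eq_mul, Matrix.vecMulVec_apply, Matrix.mul_diagonal, hA i j, hc j]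
    rcases eq_or_ne (j : ℕ) ((i : ℕ) + 1) with h | h
    · have h0 : (j : ℕ) ≠ 0 := by omega
      have hjj : (j : ℕ) + 1 = (i : ℕ) + 1 + 1 := by omega
      simp [h, h0, hjj]
      ring
    · rcases eq_or_ne (j : ℕ) 0 with h0 | h0
      · simp [h, h0]
        ring
      · simp [h, h0]
  -- decomposition of the first vector
  have hterm1 : Δ⁻¹ *ᵥ ((A + Δ * Matrix.vecMulVec k c) *ᵥ e) = θ • (B *ᵥ η) := by
    rw [heη, Matrix.mulVec_mulVec, Matrix.mulVec_mulVec, Matrix.mul_assoc, hM1,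
      Matrix.mul_smul, Matrix.smul_mulVec, ← Matrix.mul_assoc, hinvmul, Matrix.one_mul]
  have hterm2 : Δ⁻¹ *ᵥ (v • (Δ *ᵥ k)) = v • k := by
    rw [Matrix.mulVec_smul, Matrix.mulVec_mulVec, hinvmul, Matrix.one_mulVec]
  -- LHS rewriting
  have hLHS : 2 * (η ⬝ᵥ (P *ᵥ (Δ⁻¹ *ᵥ
      ((A + Δ * Matrix.vecMulVec k c) *ᵥ e + v • (Δ *ᵥ k) + g))))
      = 2 * θ * (η ⬝ᵥ (P *ᵥ (B *ᵥ η))) + 2 * v * (η ⬝ᵥ (P *ᵥ k))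
        + 2 * (η ⬝ᵥ (P *ᵥ (Δ⁻¹ *ᵥ g))) := by
    simp only [Matrix.mulVec_add, dotProduct_add, hterm1, hterm2,
      Matrix.mulVec_smul, dotProduct_smul, smul_eq_mul]
    ring
  set Sη : ℝ := ∑ i, η i ^ 2 with hSη
  have hSηnn : 0 ≤ Sη := Finset.sum_nonneg fun i _ => sq_nonneg _
  -- symmetry of P
  have hPsymm : ∀ a b : Fin n → ℝ, a ⬝ᵥ (P *ᵥ b) = b ⬝ᵥ (P *ᵥ a) := by
    intro a b
    have hPt : Pᵀ = P := by
      have := hP.1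
      rwa [Matrix.IsHermitian, Matrix.conjTranspose_eq_transpose_of_trivial] at this
    rw [Matrix.dotProduct_mulVec, ← Matrix.mulVec_transpose, hPt, dotProduct_comm]
  -- Term 1 bound via Lyapunov
  have hT1 : η ⬝ᵥ (P *ᵥ (B *ᵥ η)) ≤ -μ * Sη := by
    have h := hLyap η
    rw [Matrix.add_mulVec, dotProduct_add] at h
    have e1 : η ⬝ᵥ ((P * B) *ᵥ η) = η ⬝ᵥ (P *ᵥ (B *ᵥ η)) := by
      rw [← Matrix.mulVec_mulVec]
    have e2 : η ⬝ᵥ ((Bᵀ * P) *ᵥ η) = η ⬝ᵥ (P *ᵥ (B *ᵥ η)) := by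
      rw [← Matrix.mulVec_mulVec, Matrix.dotProduct_mulVec, Matrix.vecMul_transpose]
      exact hPsymm _ _
    rw [e1, e2, ← hSη] at h
    linarith
  -- the g bound
  have hgbound : ∀ i : Fin n, |(Δ⁻¹ *ᵥ g) i| ≤ L * Real.sqrt Sη := by
    intro i
    have hΔg : (Δ⁻¹ *ᵥ g) i = (θ ^ ((i : ℕ) + 1))⁻¹ * g i := by
      rw [hΔinv]
      simp [Matrix.mulVec_diagonal]
    have hgi : |g i| ≤ L * Real.sqrt (∑ j ∈ Finset.univ.filter (fun j => j ≤ i), (e j) ^ 2) := by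
      have := hfLip i (x + e) x
      simpa [hg, Pi.add_apply] using this
    set a : ℝ := (θ ^ ((i : ℕ) + 1))⁻¹ with ha
    have hapos : 0 < a := by positivity
    rw [hΔg, abs_mul, abs_of_pos hapos]
    calc a * |g i| ≤ a * (L * Real.sqrt (∑ j ∈ Finset.univ.filter (fun j => j ≤ i), (e j) ^ 2)) :=
          by apply mul_le_mul_of_nonneg_left hgi hapos.le
      _ = L * (a * Real.sqrt (∑ j ∈ Finset.univ.filter (fun j => j ≤ i), (e j) ^ 2)) := by ring
      _ = L * Real.sqrt (∑ j ∈ Finset.univ.filter (fun j => j ≤ i), (a * e j) ^ 2) := by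
          congr 1
          have h1 : a * Real.sqrt (∑ j ∈ Finset.univ.filter (fun j => j ≤ i), (e j) ^ 2)
              = Real.sqrt (a ^ 2 * ∑ j ∈ Finset.univ.filter (fun j => j ≤ i), (e j) ^ 2) := by
            rw [Real.sqrt_mul (sq_nonneg a), Real.sqrt_sq hapos.le]
          rw [h1, Finset.mul_sum]
          congr 1
          refine Finset.sum_congr rfl fun j _ => ?_
          ring
      _ ≤ L * Real.sqrt (∑ j ∈ Finset.univ.filter (fun j => j ≤ i), (η j) ^ 2) := by
          apply mul_le_mul_of_nonneg_left _ hL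
          apply Real.sqrt_le_sqrt
          refine Finset.sum_le_sum fun j hj => ?_
          have hj' : j ≤ i := by simpa using hj
          have hηj : η j = (θ ^ ((j : ℕ) + 1))⁻¹ * e j := by
            rw [hη, hΔinv]; simp [Matrix.mulVec_diagonal]
          rw [hηj, ha]
          rw [mul_pow, mul_pow]
          apply mul_le_mul_of_nonneg_right _ (sq_nonneg _)
          rw [← inv_pow, ← inv_pow]
          apply pow_le_pow_left₀ (by positivity)
          apply pow_le_pow_of_le_one (by positivity) (by
            simpa using inv_le_one_of_one_le₀ hθ1)
          omega
      _ ≤ L * Real.sqrt Sη := by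
          apply mul_le_mul_of_nonneg_left _ hL
          apply Real.sqrt_le_sqrt
          apply Finset.sum_le_sum_of_subset_of_nonneg (Finset.filter_subset _ _)
          intro j _ _
          exact sq_nonneg _
  have hgnorm : Real.sqrt (∑ i, ((Δ⁻¹ *ᵥ g) i) ^ 2) ≤ L * Real.sqrt n * Real.sqrt Sη := by
    have h1 : ∑ i, ((Δ⁻¹ *ᵥ g) i) ^ 2 ≤ (n : ℝ) * (L * Real.sqrt Sη) ^ 2 := by
      calc ∑ i, ((Δ⁻¹ *ᵥ g) i) ^ 2 ≤ ∑ _i : Fin n, (L * Real.sqrt Sη) ^ 2 := by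
            refine Finset.sum_le_sum fun i _ => ?_
            rw [← sq_abs]
            apply pow_le_pow_left₀ (abs_nonneg _) (hgbound i)
        _ = (n : ℝ) * (L * Real.sqrt Sη) ^ 2 := by simp [Finset.sum_const]
    calc Real.sqrt (∑ i, ((Δ⁻¹ *ᵥ g) i) ^ 2) ≤ Real.sqrt ((n : ℝ) * (L * Real.sqrt Sη) ^ 2) :=
          Real.sqrt_le_sqrt h1
      _ = Real.sqrt n * (L * Real.sqrt Sη) := by
          rw [Real.sqrt_mul (Nat.cast_nonneg n), Real.sqrt_sq (by positivity)]
      _ = L * Real.sqrt n * Real.sqrt Sη := by ring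
  -- Term 3 bound
  have hθμ : 0 < θ * μ := mul_pos hθpos hμ
  have h2opP : 2 * opP * L * Real.sqrt n ≤ θ * μ := by
    have h := le_trans (le_max_right _ _) hθ
    rw [div_le_iff₀ hμ] at h
    linarith [h]
  have hT3 : 2 * (η ⬝ᵥ (P *ᵥ (Δ⁻¹ *ᵥ g))) ≤ θ * μ * Sη := by
    have h1 := dot_mulVec_le' n P η (Δ⁻¹ *ᵥ g)
    have h2 : η ⬝ᵥ (P *ᵥ (Δ⁻¹ *ᵥ g)) ≤ opP * Real.sqrt Sη * (L * Real.sqrt n * Real.sqrt Sη) := by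
      calc η ⬝ᵥ (P *ᵥ (Δ⁻¹ *ᵥ g)) ≤ opP * Real.sqrt Sη * Real.sqrt (∑ i, ((Δ⁻¹ *ᵥ g) i) ^ 2) := h1
        _ ≤ opP * Real.sqrt Sη * (L * Real.sqrt n * Real.sqrt Sη) := by
            apply mul_le_mul_of_nonneg_left hgnorm (by positivity)
    have hss : Real.sqrt Sη * Real.sqrt Sη = Sη := Real.mul_self_sqrt hSηnn
    have h3 : opP * Real.sqrt Sη * (L * Real.sqrt n * Real.sqrt Sη) =
        opP * L * Real.sqrt n * Sη := by
      linear_combination (opP * L * Real.sqrt n) * hss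
    linarith [h2, h3, mul_le_mul_of_nonneg_right h2opP hSηnn]
  -- Term 2 bound
  set nk : ℝ := Real.sqrt (∑ i, k i ^ 2) with hnk
  have hnknn : 0 ≤ nk := Real.sqrt_nonneg _
  have hT2 : 2 * v * (η ⬝ᵥ (P *ᵥ k)) ≤ θ * μ / 2 * Sη + 2 * opP ^ 2 * nk ^ 2 / (θ * μ) * v ^ 2 := by
    have hd := abs_dot_mulVec_le' n P η k
    have h1 : 2 * v * (η ⬝ᵥ (P *ᵥ k)) ≤ 2 * |v| * (opP * Real.sqrt Sη * nk) := by
      calc 2 * v * (η ⬝ᵥ (P *ᵥ k)) ≤ |2 * v * (η ⬝ᵥ (P *ᵥ k))| := le_abs_self _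
        _ = 2 * |v| * |η ⬝ᵥ (P *ᵥ k)| := by rw [abs_mul, abs_mul]; simp
        _ ≤ 2 * |v| * (opP * Real.sqrt Sη * nk) := by
            apply mul_le_mul_of_nonneg_left hd (by positivity)
    have hyoung : 2 * |v| * (opP * Real.sqrt Sη * nk) ≤
        θ * μ / 2 * Sη + 2 * opP ^ 2 * nk ^ 2 / (θ * μ) * v ^ 2 := by
      have hs : Real.sqrt Sη ^ 2 = Sη := Real.sq_sqrt hSηnn
      have hv : |v| ^ 2 = v ^ 2 := sq_abs v
      set a : ℝ := Real.sqrt Sη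
      set b : ℝ := opP * nk * |v|
      have key : 2 * a * b ≤ θ * μ / 2 * a ^ 2 + 2 / (θ * μ) * b ^ 2 := by
        rw [← sub_nonneg]
        have heq : θ * μ / 2 * a ^ 2 + 2 / (θ * μ) * b ^ 2 - 2 * a * b
            = (θ * μ * a - 2 * b) ^ 2 / (2 * (θ * μ)) := by
          field_simp
          ring
        rw [heq]
        positivity
      calc 2 * |v| * (opP * Real.sqrt Sη * nk) = 2 * a * b := by ring
        _ ≤ θ * μ / 2 * a ^ 2 + 2 / (θ * μ) * b ^ 2 := key
        _ = θ * μ / 2 * Sη + 2 * opP ^ 2 * nk ^ 2 / (θ * μ) * v ^ 2 := by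
            rw [hs]  -- a^2 = Sη
            have : b ^ 2 = opP ^ 2 * nk ^ 2 * v ^ 2 := by
              rw [show b = opP * nk * |v| from rfl]
              rw [mul_pow, mul_pow, hv]
            rw [this]
            ring
    linarith
  -- RHS quadratic form bound
  have hquad : η ⬝ᵥ (P *ᵥ η) ≤ opP * Sη := by
    have := dot_mulVec_le' n P η η
    rwa [← hSη, mul_assoc, Real.mul_self_sqrt hSηnn, ← hopPdef] at this
  have hRHS : -(θ * μ / 2) * Sη ≤ -(θ * μ / (2 * opP)) * (η ⬝ᵥ (P *ᵥ η)) := by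
    have h1 : θ * μ / (2 * opP) * (η ⬝ᵥ (P *ᵥ η)) ≤ θ * μ / (2 * opP) * (opP * Sη) :=
      mul_le_mul_of_nonneg_left hquad (by positivity)
    have h2 : θ * μ / (2 * opP) * (opP * Sη) = θ * μ / 2 * Sη := by
      field_simp
    linarith
  -- put it all together
  rw [hLHS]
  have hmain : 2 * θ * (η ⬝ᵥ (P *ᵥ (B *ᵥ η))) ≤ -2 * θ * μ * Sη := by
    have := mul_le_mul_of_nonneg_left hT1 (by linarith : (0:ℝ) ≤ 2 * θ)
    linarith [this]
  linarith [hmain, hT2, hT3, hRHS]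
end

section
/- Let v : [0,∞) → ℝ be continuous and bounded, and let x, z : [0,∞) → ℝⁿ be differentiable functions satisfying x′(t) = A x(t) and z′(t) = A z(t) + k·(cᵀz(t) − cᵀx(t) + v(t)) for all t ≥ 0. Then for all t ≥ 0: ‖z(t) − x(t)‖ ≤ exp(−μt)·√(K₂/K₁)·‖z(0) − x(0)‖ + √(γ/(2μK₁))·sup_{0≤τ≤t}|v(τ)|. -/
open Matrix

private lemma sqrt_add_le' (a b : ℝ) (ha : 0 ≤ a) (hb : 0 ≤ b) :
    Real.sqrt (a + b) ≤ Real.sqrt a + Real.sqrt b := by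
  have h : a + b ≤ (Real.sqrt a + Real.sqrt b) ^ 2 := by
    rw [add_sq]
    nlinarith [Real.sq_sqrt ha, Real.sq_sqrt hb, Real.sqrt_nonneg a, Real.sqrt_nonneg b]
  calc Real.sqrt (a + b) ≤ Real.sqrt ((Real.sqrt a + Real.sqrt b) ^ 2) := Real.sqrt_le_sqrt h
    _ = Real.sqrt a + Real.sqrt b := Real.sqrt_sq (by positivity)

private lemma vecMulVec_mulVec' (n : ℕ) (k c e : Fin n → ℝ) :
    (Matrix.vecMulVec k c) *ᵥ e = (c ⬝ᵥ e) • k := by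
  ext i
  simp only [Matrix.mulVec, dotProduct, Matrix.vecMulVec_apply, Pi.smul_apply,
    smul_eq_mul, Finset.sum_mul, Finset.mul_sum]
  exact Finset.sum_congr rfl fun j _ => by ring

/-- ISS estimate for the Luenberger observer of a linear detectable system:
`‖z(t) - x(t)‖ ≤ exp(-μt) √(K₂/K₁) ‖z(0) - x(0)‖ + √(γ/(2μK₁)) sup_{0≤τ≤t} |v(τ)|`. -/
theorem stmt9 (n : ℕ) (hn : 1 ≤ n)
    (A : Matrix (Fin n) (Fin n) ℝ) (k c : Fin n → ℝ)
    (P : Matrix (Fin n) (Fin n) ℝ) (hP : P.PosDef)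
    (μ γ K₁ K₂ : ℝ) (hμ : 0 < μ) (hγ : 0 < γ) (hK₁ : 0 < K₁) (hK₂ : 0 < K₂)
    (hLyap : ∀ (x : Fin n → ℝ) (v : ℝ),
      x ⬝ᵥ ((P * (A + Matrix.vecMulVec k c)) *ᵥ x)
          + x ⬝ᵥ (((A + Matrix.vecMulVec k c)ᵀ * P) *ᵥ x)
          + 2 * (x ⬝ᵥ (P *ᵥ k)) * v
        ≤ -2 * μ * (x ⬝ᵥ (P *ᵥ x)) + γ * v ^ 2)
    (hPbounds : ∀ x : Fin n → ℝ,
      K₁ * ∑ i, x i ^ 2 ≤ x ⬝ᵥ (P *ᵥ x) ∧ x ⬝ᵥ (P *ᵥ x) ≤ K₂ * ∑ i, x i ^ 2)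
    (v : ℝ → ℝ) (hv : ContinuousOn v (Set.Ici 0))
    (hvbdd : ∃ M, ∀ t, 0 ≤ t → |v t| ≤ M)
    (x z : ℝ → Fin n → ℝ)
    (hx : ∀ t, 0 ≤ t → ∀ i, HasDerivAt (fun s => x s i) ((A *ᵥ x t) i) t)
    (hz : ∀ t, 0 ≤ t → ∀ i, HasDerivAt (fun s => z s i)
      ((A *ᵥ z t) i + k i * (c ⬝ᵥ z t - c ⬝ᵥ x t + v t)) t) :
    ∀ t, 0 ≤ t →
      Real.sqrt (∑ i, (z t i - x t i) ^ 2) ≤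
        Real.exp (-μ * t) * Real.sqrt (K₂ / K₁) * Real.sqrt (∑ i, (z 0 i - x 0 i) ^ 2)
          + Real.sqrt (γ / (2 * μ * K₁)) * sSup ((fun τ => |v τ|) '' Set.Icc 0 t) := by
  obtain ⟨M₀, hM₀⟩ := hvbdd
  -- symmetry of P
  have hPs : Pᵀ = P := by
    have h := hP.1.eq
    ext i j
    have := congrFun (congrFun h i) j
    simpa [Matrix.conjTranspose_apply] using this
  set B := A + Matrix.vecMulVec k c with hBdef
  set e : ℝ → Fin n → ℝ := fun s j => z s j - x s j with hedef
  -- derivative of the error components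
  have hde : ∀ s, 0 ≤ s → ∀ i, HasDerivAt (fun τ => e τ i)
      ((B *ᵥ e s) i + v s * k i) s := by
    intro s hs i
    have h := (hz s hs i).fun_sub (hx s hs i)
    refine h.congr_deriv ?_
    have he' : e s = z s - x s := rfl
    rw [hBdef, Matrix.add_mulVec, vecMulVec_mulVec', he', Matrix.mulVec_sub,
      dotProduct_sub]
    simp only [Pi.add_apply, Pi.sub_apply, Pi.smul_apply, smul_eq_mul]
    ring
  -- the Lyapunov function and its derivative
  set V : ℝ → ℝ := fun s => e s ⬝ᵥ (P *ᵥ e s) with hVdef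
  have hdV : ∀ s, 0 ≤ s → HasDerivAt V
      (2 * (e s ⬝ᵥ ((P * B) *ᵥ e s)) + 2 * (v s * (e s ⬝ᵥ (P *ᵥ k)))) s := by
    intro s hs
    set d : Fin n → ℝ := fun i => (B *ᵥ e s) i + v s * k i with hddef
    have hsum : HasDerivAt (fun τ => ∑ i, ∑ j, e τ i * (P i j * e τ j))
        (∑ i, ∑ j, (d i * (P i j * e s j) + e s i * (P i j * d j))) s := by
      apply HasDerivAt.fun_sum
      intro i _
      apply HasDerivAt.fun_sum
      intro j _
      exact (hde s hs i).mul ((hde s hs j).const_mul (P i j))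
    have hfun : (fun τ => ∑ i, ∑ j, e τ i * (P i j * e τ j)) = V := by
      funext τ
      simp only [hVdef, dotProduct, Matrix.mulVec, Finset.mul_sum]
    rw [hfun] at hsum
    convert hsum using 1
    -- identify the derivative value
    have key : (∑ i, ∑ j, (d i * (P i j * e s j) + e s i * (P i j * d j)))
        = d ⬝ᵥ (P *ᵥ e s) + e s ⬝ᵥ (P *ᵥ d) := by
      simp only [dotProduct, Matrix.mulVec, Finset.mul_sum, Finset.sum_add_distrib]
    rw [key]
    have hsymm : d ⬝ᵥ (P *ᵥ e s) = e s ⬝ᵥ (P *ᵥ d) := by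
      rw [Matrix.dotProduct_mulVec, ← Matrix.mulVec_transpose, hPs, dotProduct_comm]
    rw [hsymm]
    have hd' : d = B *ᵥ e s + v s • k := by
      funext i; simp [hddef, smul_eq_mul]
    rw [hd', Matrix.mulVec_add, Matrix.mulVec_smul, dotProduct_add,
      dotProduct_smul, Matrix.mulVec_mulVec, smul_eq_mul]
    ring
  intro t ht
  -- the supremum of |v| on [0, t]
  set M := sSup ((fun τ => |v τ|) '' Set.Icc 0 t) with hMdef
  have hbddA : BddAbove ((fun τ => |v τ|) '' Set.Icc 0 t) := by
    refine ⟨M₀, ?_⟩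
    rintro _ ⟨τ, hτ, rfl⟩
    exact hM₀ τ hτ.1
  have hMle : ∀ s, s ∈ Set.Icc (0:ℝ) t → |v s| ≤ M :=
    fun s hs => le_csSup hbddA ⟨s, hs, rfl⟩
  have hM0 : 0 ≤ M := le_trans (abs_nonneg (v 0)) (hMle 0 ⟨le_refl 0, ht⟩)
  -- Grönwall
  have hVcont : ContinuousOn V (Set.Icc 0 t) := by
    intro s hs
    exact ((hdV s hs.1).continuousAt).continuousWithinAt
  have hgron : V t ≤ gronwallBound (V 0) (-2 * μ) (γ * M ^ 2) (t - 0) := by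
    refine le_gronwallBound_of_liminf_deriv_right_le hVcont
      (f' := fun s => 2 * (e s ⬝ᵥ ((P * B) *ᵥ e s)) + 2 * (v s * (e s ⬝ᵥ (P *ᵥ k))))
      (fun s hs r hr => ((hdV s hs.1).hasDerivWithinAt.liminf_right_slope_le hr).mono
        (fun z hz => by simpa [slope_def_field, div_eq_inv_mul] using hz))
      le_rfl ?_ t (Set.right_mem_Icc.2 ht)
    intro s hs
    have hL := hLyap (e s) (v s)
    have h1 : 2 * (e s ⬝ᵥ ((P * B) *ᵥ e s)) + 2 * (v s * (e s ⬝ᵥ (P *ᵥ k)))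
        = e s ⬝ᵥ ((P * B) *ᵥ e s) + e s ⬝ᵥ ((Bᵀ * P) *ᵥ e s)
          + 2 * (e s ⬝ᵥ (P *ᵥ k)) * v s := by
      have h2 : e s ⬝ᵥ ((Bᵀ * P) *ᵥ e s) = e s ⬝ᵥ ((P * B) *ᵥ e s) := by
        rw [← Matrix.mulVec_mulVec, ← Matrix.mulVec_mulVec,
          Matrix.dotProduct_mulVec (w := P *ᵥ e s), Matrix.vecMul_transpose,
          Matrix.dotProduct_mulVec, ← Matrix.mulVec_transpose, hPs, dotProduct_comm]
      rw [h2]; ring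
    rw [h1]
    refine le_trans hL ?_
    have hvs : v s ^ 2 ≤ M ^ 2 := by
      have := hMle s ⟨hs.1, le_of_lt hs.2⟩
      calc v s ^ 2 = |v s| ^ 2 := (sq_abs _).symm
        _ ≤ M ^ 2 := by nlinarith [abs_nonneg (v s)]
    have : γ * v s ^ 2 ≤ γ * M ^ 2 := by nlinarith
    simp only [hVdef]
    linarith
  rw [sub_zero, gronwallBound_of_K_ne_0 (by nlinarith : (-2 : ℝ) * μ ≠ 0)] at hgron
  simp only [] at hgron
  -- simplify the Grönwall bound
  have hexp : Real.exp (-2 * μ * t) ≤ 1 := by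
    apply Real.exp_le_one_iff.2
    nlinarith
  have hexp0 : 0 < Real.exp (-2 * μ * t) := Real.exp_pos _
  have hV0 : V 0 ≤ K₂ * ∑ i, e 0 i ^ 2 := (hPbounds (e 0)).2
  have hS0 : (0:ℝ) ≤ ∑ i, e 0 i ^ 2 := Finset.sum_nonneg fun i _ => sq_nonneg _
  have hVt : K₁ * ∑ i, e t i ^ 2 ≤ V t := (hPbounds (e t)).1
  have hbound : V t ≤ K₂ * (∑ i, e 0 i ^ 2) * Real.exp (-2 * μ * t) + γ * M ^ 2 / (2 * μ) := by
    have h3 : γ * M ^ 2 / (-2 * μ) * (Real.exp (-2 * μ * t) - 1) ≤ γ * M ^ 2 / (2 * μ) := by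
      have hid : γ * M ^ 2 / (-2 * μ) * (Real.exp (-2 * μ * t) - 1)
          = γ * M ^ 2 * (1 - Real.exp (-2 * μ * t)) / (2 * μ) := by
        field_simp
        ring
      rw [hid, div_le_div_iff₀ (by positivity) (by positivity)]
      nlinarith [mul_nonneg (mul_nonneg (mul_nonneg hγ.le (sq_nonneg M)) hμ.le) hexp0.le]
    have h4 : V 0 * Real.exp (-2 * μ * t) ≤ K₂ * (∑ i, e 0 i ^ 2) * Real.exp (-2 * μ * t) :=
      mul_le_mul_of_nonneg_right hV0 hexp0.le
    linarith
  -- final estimate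
  have hSt : ∑ i, e t i ^ 2
      ≤ Real.exp (-2 * μ * t) * (K₂ / K₁) * (∑ i, e 0 i ^ 2) + γ / (2 * μ * K₁) * M ^ 2 := by
    have h6 := le_trans hVt hbound
    have hid2 : K₁ * (Real.exp (-2 * μ * t) * (K₂ / K₁) * (∑ i, e 0 i ^ 2)
          + γ / (2 * μ * K₁) * M ^ 2)
        = K₂ * (∑ i, e 0 i ^ 2) * Real.exp (-2 * μ * t) + γ * M ^ 2 / (2 * μ) := by
      field_simp
    have h5 : K₁ * (∑ i, e t i ^ 2) ≤ K₁ * (Real.exp (-2 * μ * t) * (K₂ / K₁)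
        * (∑ i, e 0 i ^ 2) + γ / (2 * μ * K₁) * M ^ 2) := by
      rw [hid2]; exact h6
    exact le_of_mul_le_mul_left h5 hK₁
  have hfin : Real.sqrt (∑ i, e t i ^ 2)
      ≤ Real.exp (-μ * t) * Real.sqrt (K₂ / K₁) * Real.sqrt (∑ i, e 0 i ^ 2)
        + Real.sqrt (γ / (2 * μ * K₁)) * M := by
    have step1 := Real.sqrt_le_sqrt hSt
    have ha : (0:ℝ) ≤ Real.exp (-2 * μ * t) * (K₂ / K₁) * (∑ i, e 0 i ^ 2) := by positivity
    have hb : (0:ℝ) ≤ γ / (2 * μ * K₁) * M ^ 2 := by positivity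
    have step2 := sqrt_add_le' _ _ ha hb
    have hA : Real.sqrt (Real.exp (-2 * μ * t) * (K₂ / K₁) * (∑ i, e 0 i ^ 2))
        = Real.exp (-μ * t) * Real.sqrt (K₂ / K₁) * Real.sqrt (∑ i, e 0 i ^ 2) := by
      have hEE : Real.sqrt (Real.exp (-2 * μ * t)) = Real.exp (-μ * t) := by
        rw [show (-2 : ℝ) * μ * t = (-μ * t) + (-μ * t) by ring, Real.exp_add,
          Real.sqrt_mul_self (Real.exp_pos _).le]
      rw [Real.sqrt_mul (by positivity), Real.sqrt_mul hexp0.le, hEE]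
    have hB : Real.sqrt (γ / (2 * μ * K₁) * M ^ 2)
        = Real.sqrt (γ / (2 * μ * K₁)) * M := by
      rw [Real.sqrt_mul (by positivity), Real.sqrt_sq hM0]
    calc Real.sqrt (∑ i, e t i ^ 2) ≤ _ := step1
      _ ≤ _ := step2
      _ = _ := by rw [hA, hB]
  exact hfin
end
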